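/- Let A be the adjacency matrix of a finite simple undirected graph on N vertices and let A1 be the off-diagonal part of the symmetrically normalized adjacency matrix with added self-loops. Then the matrix I − A1 is positive definite: for every nonzero vector x ∈ ℝ^N, x^T (I − A1) x > 0. -/

import Mathlib

open Matrix Finset

/-- `I - A1` is positive definite, where `A1` is the off-diagonal
part of the symmetrically normalized adjacency matrix with added self-loops. -/
theorem gtnet_one_sub_A1_posdef
    (N : ℕ) (A : Matrix (Fin N) (Fin N) ℝ)
    (hsymm : A.IsSymm)
    (h01 : ∀ i j, A i j = 0 ∨ A i j = 1)
    (hdiag : ∀ i, A i i = 0)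
    (d : Fin N → ℝ) (hd : ∀ i, d i = ∑ j, A i j)
    (A1 : Matrix (Fin N) (Fin N) ℝ)
    (hA1 : ∀ i j, A1 i j =
      if i = j then 0 else A i j / Real.sqrt ((d i + 1) * (d j + 1))) :
    ∀ x : Fin N → ℝ, x ≠ 0 → 0 < x ⬝ᵥ (1 - A1) *ᵥ x := by
  intro x hx
  have hA0 : ∀ i j, 0 ≤ A i j := by
    intro i j; rcases h01 i j with h | h <;> simp [h]
  have hd0 : ∀ i, 0 ≤ d i := by
    intro i; rw [hd]; exact Finset.sum_nonneg fun j _ => hA0 i j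
  have hd1 : ∀ i, (0:ℝ) < d i + 1 := fun i => by linarith [hd0 i]
  set s : Fin N → ℝ := fun i => Real.sqrt (d i + 1) with hs
  have hspos : ∀ i, 0 < s i := fun i => Real.sqrt_pos.2 (hd1 i)
  have hssq : ∀ i, s i * s i = d i + 1 := fun i => Real.mul_self_sqrt (hd1 i).le
  set y : Fin N → ℝ := fun i => x i / s i with hy
  have hxy : ∀ i, x i = s i * y i := by
    intro i
    simp only [hy]
    rw [mul_div_assoc']
    exact (mul_div_cancel_left₀ (x i) (hspos i).ne').symm
  -- rewrite the quadratic form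
  have hQ : x ⬝ᵥ (1 - A1) *ᵥ x
      = ∑ i, x i * x i - ∑ i, ∑ j, x i * (A1 i j * x j) := by
    have hmv : ∀ i, (A1 *ᵥ x) i = ∑ j, A1 i j * x j := fun i => rfl
    rw [Matrix.sub_mulVec, Matrix.one_mulVec, dotProduct_sub]
    have h2 : x ⬝ᵥ (A1 *ᵥ x) = ∑ i, ∑ j, x i * (A1 i j * x j) := by
      rw [dotProduct]
      refine Finset.sum_congr rfl fun i _ => ?_
      rw [hmv, Finset.mul_sum]
    rw [h2]
    rfl
  have hterm : ∀ i j, x i * (A1 i j * x j) = A i j * (y i * y j) := by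
    intro i j
    rw [hA1]
    by_cases h : i = j
    · subst h; simp [hdiag]
    · simp only [h, if_false]
      rw [Real.sqrt_mul (hd1 i).le, hxy i, hxy j]
      rw [show Real.sqrt (d i + 1) = s i from rfl, show Real.sqrt (d j + 1) = s j from rfl]
      have h1 : s i ≠ 0 := (hspos i).ne'
      have h2 : s j ≠ 0 := (hspos j).ne'
      field_simp
  have hsq : ∀ i, x i * x i = (d i + 1) * (y i * y i) := by
    intro i
    rw [hxy i]
    calc s i * y i * (s i * y i) = (s i * s i) * (y i * y i) := by ring
    _ = (d i + 1) * (y i * y i) := by rw [hssq]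
  have hQ2 : x ⬝ᵥ (1 - A1) *ᵥ x
      = ∑ i, y i * y i
        + (∑ i, d i * (y i * y i) - ∑ i, ∑ j, A i j * (y i * y j)) := by
    rw [hQ]
    simp only [hterm, hsq]
    rw [show (∑ i, (d i + 1) * (y i * y i)) = ∑ i, (d i * (y i * y i) + y i * y i)
      from Finset.sum_congr rfl fun i _ => by ring, Finset.sum_add_distrib]
    ring
  -- Laplacian identity
  have hlap : ∑ i, d i * (y i * y i) - ∑ i, ∑ j, A i j * (y i * y j)
      = (1/2) * ∑ i, ∑ j, A i j * (y i - y j)^2 := by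
    have e1 : ∑ i, ∑ j, A i j * (y i * y i) = ∑ i, d i * (y i * y i) := by
      refine Finset.sum_congr rfl fun i _ => ?_
      rw [← Finset.sum_mul, ← hd]
    have e2 : ∑ i, ∑ j, A i j * (y j * y j) = ∑ j, d j * (y j * y j) := by
      rw [Finset.sum_comm]
      refine Finset.sum_congr rfl fun j _ => ?_
      have hsy : ∀ i, A i j = A j i := fun i => hsymm.apply j i
      simp_rw [hsy]
      rw [← Finset.sum_mul, ← hd]
    have expand : ∑ i, ∑ j, A i j * (y i - y j)^2
        = (∑ i, ∑ j, A i j * (y i * y i)) + (∑ i, ∑ j, A i j * (y j * y j))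
          - ∑ i, ∑ j, 2 * (A i j * (y i * y j)) := by
      rw [← Finset.sum_add_distrib, ← Finset.sum_sub_distrib]
      refine Finset.sum_congr rfl fun i _ => ?_
      rw [← Finset.sum_add_distrib, ← Finset.sum_sub_distrib]
      exact Finset.sum_congr rfl fun j _ => by ring
    have e3 : ∑ i, ∑ j, 2 * (A i j * (y i * y j))
        = 2 * ∑ i, ∑ j, A i j * (y i * y j) := by
      simp_rw [Finset.mul_sum]
    rw [expand, e1, e2, e3]
    ring
  have hlap_nonneg : 0 ≤ ∑ i, ∑ j, A i j * (y i - y j)^2 :=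
    Finset.sum_nonneg fun i _ => Finset.sum_nonneg fun j _ =>
      mul_nonneg (hA0 i j) (sq_nonneg _)
  have hypos : 0 < ∑ i, y i * y i := by
    obtain ⟨i, hi⟩ := Function.ne_iff.mp hx
    have hyi : y i ≠ 0 := by
      simp only [hy]
      exact div_ne_zero (by simpa using hi) (hspos i).ne'
    refine Finset.sum_pos' (fun j _ => mul_self_nonneg _) ⟨i, Finset.mem_univ i, ?_⟩
    exact mul_self_pos.mpr hyi
  rw [hQ2, hlap]
  linarith
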